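/- For any positive integers m, K with N = 2K+1 and any trigonometric polynomial φ of degree at most mK in d dimensions, the de-aliasing (Fourier collocation) projection R_N(φ) onto trigonometric polynomials of degree at most K satisfies ‖R_N(φ)‖_{L²} ≤ m^(d/2)·‖φ‖_{L²}. -/

import Mathlib

open Finset

/-- Aliasing error control (Lemma 2.1, case `r = 0`): identifying a trigonometric
polynomial `φ` of degree at most `m·K` in `d` dimensions with its Fourier
coefficients `c : (Fin d → ℤ) → ℂ` supported on frequencies `|ℓᵢ| ≤ m·K`, the
de-aliasing projection `R_N φ` (with `N = 2K+1`) has Fourier coefficients, for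
`|ℓᵢ| ≤ K`, given by the sum of all coefficients `c ℓ'` with `ℓ' ≡ ℓ (mod N)`.
By Parseval, `‖R_N φ‖_{L²} ≤ m^(d/2) · ‖φ‖_{L²}` reads as the corresponding
inequality between the `ℓ²` norms of the coefficient arrays. -/
theorem stmt18 (d m K : ℕ) (hd : 0 < d) (hm : 0 < m) (hK : 0 < K)
    (N : ℕ) (hN : N = 2 * K + 1) (c : (Fin d → ℤ) → ℂ) :
    Real.sqrt (∑ ℓ ∈ Fintype.piFinset
        (fun _ : Fin d => Finset.Icc (-(K : ℤ)) (K : ℤ)),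
      ‖∑ ℓ' ∈ (Fintype.piFinset
          (fun _ : Fin d => Finset.Icc (-((m * K : ℕ) : ℤ)) ((m * K : ℕ) : ℤ))).filter
            (fun ℓ' => ∀ i, (N : ℤ) ∣ (ℓ' i - ℓ i)), c ℓ'‖ ^ 2)
      ≤ (m : ℝ) ^ ((d : ℝ) / 2) *
        Real.sqrt (∑ ℓ ∈ Fintype.piFinset
            (fun _ : Fin d => Finset.Icc (-((m * K : ℕ) : ℤ)) ((m * K : ℕ) : ℤ)),
          ‖c ℓ‖ ^ 2) := by
  set A := Fintype.piFinset (fun _ : Fin d => Finset.Icc (-(K : ℤ)) (K : ℤ)) with hA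
  set B := Fintype.piFinset
      (fun _ : Fin d => Finset.Icc (-((m * K : ℕ) : ℤ)) ((m * K : ℕ) : ℤ)) with hB
  set S : (Fin d → ℤ) → Finset (Fin d → ℤ) :=
    fun ℓ => B.filter (fun ℓ' => ∀ i, (N : ℤ) ∣ (ℓ' i - ℓ i)) with hS
  have hNpos : (0 : ℤ) < N := by exact_mod_cast Nat.pos_of_ne_zero (by omega)
  have hmk : ((m * K : ℕ) : ℤ) = (m : ℤ) * (K : ℤ) := by push_cast; ring
  have hNZ : ((N : ℕ) : ℤ) = 2 * (K : ℤ) + 1 := by rw [hN]; push_cast; ring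
  have hmZ : (1 : ℤ) ≤ (m : ℤ) := by exact_mod_cast hm
  have hKZ : (1 : ℤ) ≤ (K : ℤ) := by exact_mod_cast hK
  -- cardinality bound
  have hcard : ∀ ℓ ∈ A, (S ℓ).card ≤ m ^ d := by
    intro ℓ hℓ
    have : S ℓ = Fintype.piFinset (fun i =>
        (Finset.Icc (-((m * K : ℕ) : ℤ)) ((m * K : ℕ) : ℤ)).filter
          (fun x => (N : ℤ) ∣ x - ℓ i)) := by
      ext x
      simp [hS, hB, Fintype.mem_piFinset, mem_filter, forall_and]
    rw [this, Fintype.card_piFinset]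
    have hm1 : ∀ i : Fin d,
        ((Finset.Icc (-((m * K : ℕ) : ℤ)) ((m * K : ℕ) : ℤ)).filter
          (fun x => (N : ℤ) ∣ x - ℓ i)).card ≤ m := by
      intro i
      have := Finset.card_le_card_of_injOn
        (f := fun x : ℤ => (x + (m * K : ℕ)) / (N : ℤ))
        (s := (Finset.Icc (-((m * K : ℕ) : ℤ)) ((m * K : ℕ) : ℤ)).filter
          (fun x => (N : ℤ) ∣ x - ℓ i))
        (t := Finset.Icc (0 : ℤ) ((m : ℤ) - 1))
        (by
          intro x hx
          simp only [Finset.mem_coe, mem_filter, Finset.mem_Icc] at hx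
          obtain ⟨⟨hx1, hx2⟩, hdvd⟩ := hx
          have h0 : (0 : ℤ) ≤ x + (m * K : ℕ) := by rw [hmk]; nlinarith
          refine Finset.mem_Icc.2 ⟨Int.ediv_nonneg h0 hNpos.le, ?_⟩
          have hlt : x + (m * K : ℕ) < (m : ℤ) * N := by
            rw [hmk, hNZ]; nlinarith
          have h2 := (Int.ediv_lt_iff_lt_mul (a := x + (m * K : ℕ)) (b := (m : ℤ))
            hNpos).2 hlt
          linarith [Int.lt_iff_add_one_le.mp h2])
        (by
          intro x hx y hy hxy
          simp only at hxy
          simp only [Finset.coe_filter, Set.mem_setOf_eq, Finset.mem_Icc] at hx hy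
          have hdvd' : (N : ℤ) ∣ (y + (m * K : ℕ)) - (x + (m * K : ℕ)) := by
            have h1 : (N : ℤ) ∣ (y - ℓ i) - (x - ℓ i) := dvd_sub hy.2 hx.2
            have h2 : (y + ((m * K : ℕ) : ℤ)) - (x + (m * K : ℕ)) = (y - ℓ i) - (x - ℓ i) := by
              ring
            rw [h2]; exact h1
          have hmod : (x + ((m * K : ℕ) : ℤ)) % (N : ℤ) = (y + (m * K : ℕ)) % (N : ℤ) :=
            Int.modEq_iff_dvd.2 hdvd'
          have ex := Int.mul_ediv_add_emod (x + ((m * K : ℕ) : ℤ)) (N : ℤ)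
          have ey := Int.mul_ediv_add_emod (y + ((m * K : ℕ) : ℤ)) (N : ℤ)
          have hfin : x + ((m * K : ℕ) : ℤ) = y + ((m * K : ℕ) : ℤ) := by
            rw [← ex, ← ey, hxy, hmod]
          linarith)
      calc _ ≤ (Finset.Icc (0 : ℤ) ((m : ℤ) - 1)).card := this
        _ = m := by rw [Int.card_Icc]; omega
    calc ∏ i : Fin d, _ ≤ ∏ _i : Fin d, m := Finset.prod_le_prod (fun _ _ => Nat.zero_le _) (fun i _ => hm1 i)
      _ = m ^ d := by simp
  -- disjointness
  have hdisj : (A : Set (Fin d → ℤ)).PairwiseDisjoint S := by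
    intro ℓ₁ h₁ ℓ₂ h₂ hne
    refine Finset.disjoint_left.2 ?_
    intro x hx₁ hx₂
    simp only [hS, mem_filter] at hx₁ hx₂
    apply hne
    funext i
    have d1 := hx₁.2 i
    have d2 := hx₂.2 i
    have hdvd : (N : ℤ) ∣ ℓ₂ i - ℓ₁ i := by
      have : (N : ℤ) ∣ (x i - ℓ₁ i) - (x i - ℓ₂ i) := dvd_sub d1 d2
      simpa [sub_sub_sub_cancel_left] using this
    have hb1 : ℓ₁ i ∈ Finset.Icc (-(K : ℤ)) (K : ℤ) := by
      have := (Fintype.mem_piFinset.1 h₁) i; simpa [hA] using this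
    have hb2 : ℓ₂ i ∈ Finset.Icc (-(K : ℤ)) (K : ℤ)  := by
      have := (Fintype.mem_piFinset.1 h₂) i; simpa [hA] using this
    simp only [Finset.mem_Icc] at hb1 hb2
    have : ℓ₂ i - ℓ₁ i = 0 := by
      apply Int.eq_zero_of_abs_lt_dvd hdvd
      rw [abs_lt, hNZ]; constructor <;> linarith
    omega
  -- main sum bound
  have key : ∑ ℓ ∈ A, ‖∑ ℓ' ∈ S ℓ, c ℓ'‖ ^ 2
      ≤ (m : ℝ) ^ d * ∑ ℓ ∈ B, ‖c ℓ‖ ^ 2 := by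
    have step1 : ∀ ℓ ∈ A, ‖∑ ℓ' ∈ S ℓ, c ℓ'‖ ^ 2
        ≤ (m : ℝ) ^ d * ∑ ℓ' ∈ S ℓ, ‖c ℓ'‖ ^ 2 := by
      intro ℓ hℓ
      have h1 : ‖∑ ℓ' ∈ S ℓ, c ℓ'‖ ≤ ∑ ℓ' ∈ S ℓ, ‖c ℓ'‖ := norm_sum_le _ _
      have h2 : ‖∑ ℓ' ∈ S ℓ, c ℓ'‖ ^ 2 ≤ (∑ ℓ' ∈ S ℓ, ‖c ℓ'‖) ^ 2 :=
        pow_le_pow_left₀ (norm_nonneg _) h1 2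
      have h3 : (∑ ℓ' ∈ S ℓ, ‖c ℓ'‖) ^ 2
          ≤ ((S ℓ).card : ℝ) * ∑ ℓ' ∈ S ℓ, ‖c ℓ'‖ ^ 2 := by
        exact_mod_cast sq_sum_le_card_mul_sum_sq (s := S ℓ) (f := fun x => ‖c x‖)
      have h4 : ((S ℓ).card : ℝ) ≤ (m : ℝ) ^ d := by
        exact_mod_cast Nat.cast_le.2 (hcard ℓ hℓ) |>.trans_eq (by push_cast; ring)
      calc ‖∑ ℓ' ∈ S ℓ, c ℓ'‖ ^ 2 ≤ ((S ℓ).card : ℝ) * ∑ ℓ' ∈ S ℓ, ‖c ℓ'‖ ^ 2 :=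
            h2.trans h3
        _ ≤ (m : ℝ) ^ d * ∑ ℓ' ∈ S ℓ, ‖c ℓ'‖ ^ 2 :=
            mul_le_mul_of_nonneg_right h4 (Finset.sum_nonneg fun _ _ => by positivity)
    calc ∑ ℓ ∈ A, ‖∑ ℓ' ∈ S ℓ, c ℓ'‖ ^ 2
        ≤ ∑ ℓ ∈ A, (m : ℝ) ^ d * ∑ ℓ' ∈ S ℓ, ‖c ℓ'‖ ^ 2 :=
          Finset.sum_le_sum step1
      _ = (m : ℝ) ^ d * ∑ ℓ ∈ A, ∑ ℓ' ∈ S ℓ, ‖c ℓ'‖ ^ 2 := by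
          rw [Finset.mul_sum]
      _ = (m : ℝ) ^ d * ∑ ℓ' ∈ A.biUnion S, ‖c ℓ'‖ ^ 2 := by
          rw [Finset.sum_biUnion hdisj]
      _ ≤ (m : ℝ) ^ d * ∑ ℓ ∈ B, ‖c ℓ‖ ^ 2 := by
          apply mul_le_mul_of_nonneg_left _ (by positivity)
          apply Finset.sum_le_sum_of_subset_of_nonneg
          · intro x hx
            obtain ⟨ℓ, -, hx⟩ := Finset.mem_biUnion.1 hx
            exact (Finset.mem_filter.1 hx).1
          · intros; positivity
  -- conclude with sqrt
  have h0 : (0 : ℝ) ≤ ∑ ℓ ∈ B, ‖c ℓ‖ ^ 2 := Finset.sum_nonneg fun _ _ => by positivity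
  calc Real.sqrt (∑ ℓ ∈ A, ‖∑ ℓ' ∈ S ℓ, c ℓ'‖ ^ 2)
      ≤ Real.sqrt ((m : ℝ) ^ d * ∑ ℓ ∈ B, ‖c ℓ‖ ^ 2) := Real.sqrt_le_sqrt key
    _ = Real.sqrt ((m : ℝ) ^ d) * Real.sqrt (∑ ℓ ∈ B, ‖c ℓ‖ ^ 2) :=
        Real.sqrt_mul (by positivity) _
    _ = (m : ℝ) ^ ((d : ℝ) / 2) * Real.sqrt (∑ ℓ ∈ B, ‖c ℓ‖ ^ 2) := by
        congr 1
        rw [Real.sqrt_eq_rpow, ← Real.rpow_natCast (m : ℝ) d,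
          ← Real.rpow_mul (by positivity), mul_one_div]
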